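/- (Deterministic core of the MQL guarantee.) Let d^D be a distribution on S×A with d^π(s,a) > 0 implying d^D(s,a) > 0, and let W be a set of functions S×A → ℝ containing the marginalized importance weight w^π(s,a) = d^π(s,a)/d^D(s,a) (with w^π(s,a) = 0 when d^π(s,a) = 0). Then for every function f : S×A → ℝ, |J_f(π) − J(π)| ≤ (1/(1−γ)) · max_{w ∈ W} |E_{(s,a)~d^D}[w(s,a)·(f(s,a) − (T^π f)(s,a))]|; moreover the right-hand side is 0 when f = Q^π. -/

import Mathlib

open scoped BigOperators

noncomputable section

/-- The policy-specific Bellman operator: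
`(T^π f)(s,a) = R(s,a) + γ E_{s' ~ P(·|s,a)}[f(s',π)]`. -/
def bellmanOp {S A : Type*} [Fintype S] [Fintype A] (P : S → A → S → ℝ)
    (R : S → A → ℝ) (γ : ℝ) (pol : S → A → ℝ) (f : S → A → ℝ) : S → A → ℝ :=
  fun s a => R s a + γ * ∑ s', P s a s' * ∑ a', pol s' a' * f s' a'

/-- `occt P pol d0 t s a = Pr_π[s_t = s, a_t = a]`, the time-`t` state-action
distribution of the stationary policy `pol` started from `d0`. -/
def occt {S A : Type*} [Fintype S] [Fintype A] (P : S → A → S → ℝ)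
    (pol : S → A → ℝ) (d0 : S → ℝ) : ℕ → S → A → ℝ
  | 0 => fun s a => d0 s * pol s a
  | (t + 1) => fun s' a' => (∑ s, ∑ a, occt P pol d0 t s a * P s a s') * pol s' a'

/-- Discounted state-action occupancy `d^π = (1-γ) Σ_t γ^t d_t^π`. -/
def docc {S A : Type*} [Fintype S] [Fintype A] (P : S → A → S → ℝ)
    (pol : S → A → ℝ) (d0 : S → ℝ) (γ : ℝ) (s : S) (a : A) : ℝ :=
  (1 - γ) * ∑' t : ℕ, γ ^ t * occt P pol d0 t s a

/-- Expected discounted return `J(π) = E_π[Σ_t γ^t r_t]`. -/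
def Jret {S A : Type*} [Fintype S] [Fintype A] (P : S → A → S → ℝ)
    (R : S → A → ℝ) (γ : ℝ) (pol : S → A → ℝ) (d0 : S → ℝ) : ℝ :=
  ∑' t : ℕ, γ ^ t * ∑ s, ∑ a, occt P pol d0 t s a * R s a

/-- `J_f(π) = E_{s ~ d0}[f(s,π)]`. -/
def Jf {S A : Type*} [Fintype S] [Fintype A] (d0 : S → ℝ) (pol : S → A → ℝ)
    (f : S → A → ℝ) : ℝ :=
  ∑ s, d0 s * ∑ a, pol s a * f s a

lemma sum_rot3 {α β δ : Type*} [Fintype α] [Fintype β] [Fintype δ] (F : α → β → δ → ℝ) :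
    ∑ z : δ, ∑ x : α, ∑ y : β, F x y z = ∑ x, ∑ y, ∑ z, F x y z := by
  rw [Finset.sum_comm]
  exact Finset.sum_congr rfl fun x _ => Finset.sum_comm

section Aux
variable {S A : Type*} [Fintype S] [Fintype A]
    (P : S → A → S → ℝ) (R : S → A → ℝ) (γ : ℝ) (d0 : S → ℝ) (pol : S → A → ℝ)

lemma occt_nonneg (hP0 : ∀ s a s', 0 ≤ P s a s') (hd00 : ∀ s, 0 ≤ d0 s)
    (hpol0 : ∀ s a, 0 ≤ pol s a) : ∀ t s a, 0 ≤ occt P pol d0 t s a := by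
  intro t
  induction t with
  | zero => intro s a; exact mul_nonneg (hd00 s) (hpol0 s a)
  | succ t ih =>
    intro s' a'
    refine mul_nonneg ?_ (hpol0 s' a')
    exact Finset.sum_nonneg fun s _ => Finset.sum_nonneg fun a _ =>
      mul_nonneg (ih s a) (hP0 s a s')

lemma occt_sum_one (hP1 : ∀ s a, ∑ s', P s a s' = 1) (hd01 : ∑ s, d0 s = 1)
    (hpol1 : ∀ s, ∑ a, pol s a = 1) : ∀ t, ∑ s, ∑ a, occt P pol d0 t s a = 1 := by
  intro t
  induction t with
  | zero =>
    simp only [occt, ← Finset.mul_sum]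
    simp [hpol1, hd01]
  | succ t ih =>
    simp only [occt, ← Finset.mul_sum, hpol1, mul_one]
    calc ∑ s', ∑ s, ∑ a, occt P pol d0 t s a * P s a s'
        = ∑ s, ∑ a, ∑ s', occt P pol d0 t s a * P s a s' := sum_rot3 _
      _ = ∑ s, ∑ a, occt P pol d0 t s a := by
          simp [← Finset.mul_sum, hP1]
      _ = 1 := ih

lemma occt_le_one (hP0 : ∀ s a s', 0 ≤ P s a s') (hP1 : ∀ s a, ∑ s', P s a s' = 1)
    (hd00 : ∀ s, 0 ≤ d0 s) (hd01 : ∑ s, d0 s = 1)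
    (hpol0 : ∀ s a, 0 ≤ pol s a) (hpol1 : ∀ s, ∑ a, pol s a = 1) :
    ∀ t s a, occt P pol d0 t s a ≤ 1 := by
  intro t s a
  calc occt P pol d0 t s a ≤ ∑ a', occt P pol d0 t s a' :=
        Finset.single_le_sum (fun a' _ => occt_nonneg P d0 pol hP0 hd00 hpol0 t s a')
          (Finset.mem_univ a)
    _ ≤ ∑ s', ∑ a', occt P pol d0 t s' a' :=
        Finset.single_le_sum (fun s' _ => Finset.sum_nonneg fun a' _ =>
          occt_nonneg P d0 pol hP0 hd00 hpol0 t s' a') (Finset.mem_univ s)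
    _ = 1 := occt_sum_one P d0 pol hP1 hd01 hpol1 t

lemma occt_bellman_step (f : S → A → ℝ) (t : ℕ) :
    ∑ s, ∑ a, occt P pol d0 t s a * bellmanOp P R γ pol f s a
      = (∑ s, ∑ a, occt P pol d0 t s a * R s a)
        + γ * ∑ s, ∑ a, occt P pol d0 (t + 1) s a * f s a := by
  simp only [bellmanOp, mul_add, Finset.sum_add_distrib]
  congr 1
  set g : S → ℝ := fun s' => ∑ a', pol s' a' * f s' a' with hg
  have hR : γ * ∑ s', ∑ a', occt P pol d0 (t+1) s' a' * f s' a'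
      = γ * ∑ s', (∑ s, ∑ a, occt P pol d0 t s a * P s a s') * g s' := by
    congr 1
    refine Finset.sum_congr rfl fun s' _ => ?_
    simp only [occt, hg, mul_assoc, ← Finset.mul_sum]
  rw [hR]
  have hL : ∀ s a, occt P pol d0 t s a * (γ * ∑ s', P s a s' * g s')
      = γ * ∑ s', occt P pol d0 t s a * P s a s' * g s' := by
    intro s a
    rw [Finset.mul_sum, Finset.mul_sum, Finset.mul_sum]
    exact Finset.sum_congr rfl fun s' _ => by ring
  simp only [show ∀ s a, occt P pol d0 t s a * (γ * ∑ s', P s a s' * ∑ a', pol s' a' * f s' a') = _ from hL, ← Finset.mul_sum]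
  congr 1
  simp only [Finset.sum_mul]
  exact (sum_rot3 _).symm

end Aux

set_option maxHeartbeats 1000000 in
/-- **Deterministic core of the MQL guarantee.** Let `W` be a (finite) class of
weight functions containing the marginalized importance weight
`w^π = d^π/d^D` (with the convention `0/0 = 0`). Then for every `f`,
`|J_f(π) − J(π)| ≤ (1/(1−γ)) max_{w ∈ W} |E_{d^D}[w·(f − T^π f)]|`,
and the right-hand side max is `0` when `f = Q^π` (the fixed point of `T^π`). -/
theorem mql_deterministic_core {S A : Type*} [Fintype S] [Fintype A]
    (P : S → A → S → ℝ) (R : S → A → ℝ) (Rmax γ : ℝ) (d0 : S → ℝ)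
    (pol : S → A → ℝ)
    (hP0 : ∀ s a s', 0 ≤ P s a s') (hP1 : ∀ s a, ∑ s', P s a s' = 1)
    (hR : ∀ s a, 0 ≤ R s a ∧ R s a ≤ Rmax)
    (hγ0 : 0 ≤ γ) (hγ1 : γ < 1)
    (hd00 : ∀ s, 0 ≤ d0 s) (hd01 : ∑ s, d0 s = 1)
    (hpol0 : ∀ s a, 0 ≤ pol s a) (hpol1 : ∀ s, ∑ a, pol s a = 1)
    (dD : S → A → ℝ)
    (hdD0 : ∀ s a, 0 ≤ dD s a) (hdD1 : ∑ s, ∑ a, dD s a = 1)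
    (hsupp : ∀ s a, 0 < docc P pol d0 γ s a → 0 < dD s a)
    (Qπ : S → A → ℝ) (hQ : ∀ s a, Qπ s a = bellmanOp P R γ pol Qπ s a)
    (W : Finset (S → A → ℝ))
    (hwπ : (fun s a => docc P pol d0 γ s a / dD s a) ∈ W) :
    (∀ f : S → A → ℝ,
        |Jf d0 pol f - Jret P R γ pol d0| ≤
          (1 / (1 - γ)) *
            W.sup' ⟨_, hwπ⟩ (fun w =>
              |∑ s, ∑ a, dD s a * (w s a * (f s a - bellmanOp P R γ pol f s a))|))
      ∧ W.sup' ⟨_, hwπ⟩ (fun w =>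
          |∑ s, ∑ a, dD s a * (w s a * (Qπ s a - bellmanOp P R γ pol Qπ s a))|) = 0 := by
  have h1γ : (0:ℝ) < 1 - γ := by linarith
  have hocc0 := occt_nonneg P d0 pol hP0 hd00 hpol0
  have hoccle := occt_le_one P d0 pol hP0 hP1 hd00 hd01 hpol0 hpol1
  have hgeo : Summable (fun t : ℕ => γ ^ t) := summable_geometric_of_lt_one hγ0 hγ1
  -- summability of γ^t * occt t s a * c
  have hsumm : ∀ (s : S) (a : A) (c : ℝ),
      Summable (fun t => γ ^ t * occt P pol d0 t s a * c) := by
    intro s a c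
    refine Summable.of_norm_bounded (g := fun t => γ ^ t * |c|) (hgeo.mul_right |c|) ?_
    intro t
    rw [Real.norm_eq_abs, abs_mul, abs_mul, abs_pow, abs_of_nonneg hγ0,
      abs_of_nonneg (hocc0 t s a)]
    calc γ ^ t * occt P pol d0 t s a * |c| ≤ γ ^ t * 1 * |c| :=
          mul_le_mul_of_nonneg_right
            (mul_le_mul_of_nonneg_left (hoccle t s a) (pow_nonneg hγ0 t)) (abs_nonneg c)
      _ = γ ^ t * |c| := by ring
  -- distributing γ^t over the finite sum
  have hdist : ∀ (g : S → A → ℝ) (t : ℕ),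
      γ ^ t * ∑ s, ∑ a, occt P pol d0 t s a * g s a
        = ∑ s, ∑ a, γ ^ t * occt P pol d0 t s a * g s a := by
    intro g t
    rw [Finset.mul_sum]
    refine Finset.sum_congr rfl fun s _ => ?_
    rw [Finset.mul_sum]
    exact Finset.sum_congr rfl fun a _ => by ring
  have hsummF : ∀ g : S → A → ℝ,
      Summable (fun t => γ ^ t * ∑ s, ∑ a, occt P pol d0 t s a * g s a) := by
    intro g
    have : (fun t => γ ^ t * ∑ s, ∑ a, occt P pol d0 t s a * g s a)
        = fun t => ∑ s, ∑ a, γ ^ t * occt P pol d0 t s a * g s a := funext (hdist g)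
    rw [this]
    exact summable_sum fun s _ => summable_sum fun a _ => hsumm s a (g s a)
  have hdocc0 : ∀ s a, 0 ≤ docc P pol d0 γ s a := by
    intro s a
    refine mul_nonneg (le_of_lt h1γ) (tsum_nonneg fun t => ?_)
    exact mul_nonneg (pow_nonneg hγ0 t) (hocc0 t s a)
  -- Key identity
  have key : ∀ f : S → A → ℝ,
      Jf d0 pol f - Jret P R γ pol d0
        = (1 / (1 - γ)) * ∑ s, ∑ a,
            dD s a * ((docc P pol d0 γ s a / dD s a) *
              (f s a - bellmanOp P R γ pol f s a)) := by
    intro f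
    set g : S → A → ℝ := fun s a => f s a - bellmanOp P R γ pol f s a with hgdef
    -- Step 1: Jf - Jret = ∑' t, γ^t * ∑∑ occt * g
    have hF := hsummF f
    have hFs : Summable (fun t => γ ^ (t+1) * ∑ s, ∑ a, occt P pol d0 (t+1) s a * f s a) :=
      (summable_nat_add_iff
        (f := fun t => γ ^ t * ∑ s, ∑ a, occt P pol d0 t s a * f s a) 1).2 hF
    have hRs := hsummF R
    have hterm : ∀ t : ℕ,
        γ ^ t * ∑ s, ∑ a, occt P pol d0 t s a * g s a
          = (γ ^ t * ∑ s, ∑ a, occt P pol d0 t s a * f s a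
              - γ ^ (t+1) * ∑ s, ∑ a, occt P pol d0 (t+1) s a * f s a)
            - γ ^ t * ∑ s, ∑ a, occt P pol d0 t s a * R s a := by
      intro t
      have hsplit : ∑ s, ∑ a, occt P pol d0 t s a * g s a
          = (∑ s, ∑ a, occt P pol d0 t s a * f s a)
            - ∑ s, ∑ a, occt P pol d0 t s a * bellmanOp P R γ pol f s a := by
        simp only [hgdef, mul_sub, Finset.sum_sub_distrib]
      rw [hsplit, occt_bellman_step]
      ring
    have step1 : Jf d0 pol f - Jret P R γ pol d0
        = ∑' t, γ ^ t * ∑ s, ∑ a, occt P pol d0 t s a * g s a := by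
      have hA0 : γ ^ 0 * ∑ s, ∑ a, occt P pol d0 0 s a * f s a = Jf d0 pol f := by
        simp only [pow_zero, one_mul, occt, Jf]
        exact Finset.sum_congr rfl fun s _ => by
          rw [Finset.mul_sum]
          exact Finset.sum_congr rfl fun a _ => by ring
      have htsub : ∑' t, γ ^ t * ∑ s, ∑ a, occt P pol d0 t s a * g s a
          = (∑' t, (γ ^ t * ∑ s, ∑ a, occt P pol d0 t s a * f s a
              - γ ^ (t+1) * ∑ s, ∑ a, occt P pol d0 (t+1) s a * f s a))
            - ∑' t, γ ^ t * ∑ s, ∑ a, occt P pol d0 t s a * R s a := by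
        rw [← Summable.tsum_sub (hF.sub hFs) hRs]
        exact tsum_congr hterm
      rw [htsub, Summable.tsum_sub hF hFs]
      have hshift : ∑' t, γ ^ (t+1) * ∑ s, ∑ a, occt P pol d0 (t+1) s a * f s a
          = (∑' t, γ ^ t * ∑ s, ∑ a, occt P pol d0 t s a * f s a) - Jf d0 pol f := by
        have := Summable.tsum_eq_zero_add hF
        rw [this, hA0]
        ring
      rw [hshift]
      simp only [Jret]
      ring
    -- Step 2: swap tsum and finite sums
    have step2 : ∑' t, γ ^ t * ∑ s, ∑ a, occt P pol d0 t s a * g s a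
        = ∑ s, ∑ a, (docc P pol d0 γ s a / (1 - γ)) * g s a := by
      calc ∑' t, γ ^ t * ∑ s, ∑ a, occt P pol d0 t s a * g s a
          = ∑' t, ∑ s, ∑ a, γ ^ t * occt P pol d0 t s a * g s a :=
            tsum_congr (hdist g)
        _ = ∑ s, ∑' t, ∑ a, γ ^ t * occt P pol d0 t s a * g s a :=
            Summable.tsum_finsetSum fun s _ => summable_sum fun a _ => hsumm s a (g s a)
        _ = ∑ s, ∑ a, ∑' t, γ ^ t * occt P pol d0 t s a * g s a :=
            Finset.sum_congr rfl fun s _ => Summable.tsum_finsetSum fun a _ => hsumm s a (g s a)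
        _ = ∑ s, ∑ a, (docc P pol d0 γ s a / (1 - γ)) * g s a := by
            refine Finset.sum_congr rfl fun s _ => Finset.sum_congr rfl fun a _ => ?_
            rw [tsum_mul_right]
            congr 1
            rw [docc]
            field_simp
        _ = ∑ s, ∑ a, (docc P pol d0 γ s a / (1 - γ)) * g s a := rfl
    -- Step 3: docc * g = dD * (docc/dD * g)
    have step3 : ∀ s a, (docc P pol d0 γ s a / (1 - γ)) * g s a
        = (1 / (1 - γ)) * (dD s a * ((docc P pol d0 γ s a / dD s a) * g s a)) := by
      intro s a
      rcases eq_or_lt_of_le (hdD0 s a) with h0 | hpos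
      · have hd : docc P pol d0 γ s a = 0 := by
          by_contra hne
          have : 0 < docc P pol d0 γ s a := lt_of_le_of_ne (hdocc0 s a) (Ne.symm hne)
          exact absurd (hsupp s a this) (by rw [← h0]; exact lt_irrefl 0)
        rw [hd, ← h0]
        ring
      · field_simp
    rw [step1, step2]
    simp only [step3, ← Finset.mul_sum]
    rfl
  constructor
  · intro f
    rw [key f, abs_mul, abs_of_nonneg (le_of_lt (by positivity : (0:ℝ) < 1/(1-γ)))]
    refine mul_le_mul_of_nonneg_left ?_ (le_of_lt (by positivity : (0:ℝ) < 1/(1-γ)))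
    exact Finset.le_sup' (fun w =>
      |∑ s, ∑ a, dD s a * (w s a * (f s a - bellmanOp P R γ pol f s a))|) hwπ
  · have hzero : ∀ s a, Qπ s a - bellmanOp P R γ pol Qπ s a = 0 :=
      fun s a => sub_eq_zero.2 (hQ s a)
    calc W.sup' ⟨_, hwπ⟩ (fun w =>
          |∑ s, ∑ a, dD s a * (w s a * (Qπ s a - bellmanOp P R γ pol Qπ s a))|)
        = W.sup' ⟨_, hwπ⟩ (fun _ => (0:ℝ)) :=
          Finset.sup'_congr _ rfl (fun w _ => by simp [hzero])
      _ = 0 := Finset.sup'_const _ _
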